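/- Let d(x) be a global minimizer of d ↦ Q(x,d) and set t(x) = Q(x,d(x)). Then there exist λ_1,…,λ_m ≥ 0 with Σ_{j=1}^m λ_j = 1 and vectors ξ_j ∈ ∂g_j(x + d(x)) for j = 1,…,m such that Σ_{j=1}^m λ_j(∇f_j(x) + ∇²f_j(x) d(x) + ξ_j) = 0, λ_j·(Q_j(x,d(x)) − t(x)) = 0 for every j, and Q_j(x,d(x)) ≤ t(x) for every j. -/

import Mathlib

open Filter Topology Finset
open scoped RealInnerProductSpace

noncomputable section

/-- One-sided directional derivative: `c = F'(x; d) = lim_{α→0⁺} (F(x+αd) − F(x))/α`. -/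
def HasDirDeriv {n : ℕ} (F : EuclideanSpace ℝ (Fin n) → ℝ)
    (x d : EuclideanSpace ℝ (Fin n)) (c : ℝ) : Prop :=
  Filter.Tendsto (fun α : ℝ => (F (x + α • d) - F x) / α) (nhdsWithin 0 (Set.Ioi 0)) (nhds c)

/-- Subdifferential of a convex function: `∂h(x) = {ξ : h(y) ≥ h(x) + ⟪ξ, y − x⟫ ∀ y}`. -/
def subdiff {n : ℕ} (h : EuclideanSpace ℝ (Fin n) → ℝ) (x : EuclideanSpace ℝ (Fin n)) :
    Set (EuclideanSpace ℝ (Fin n)) :=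
  {ξ | ∀ y, h x + ⟪ξ, y - x⟫ ≤ h y}

/-- `Q_j(x,d) = ∇f_j(x)ᵀd + ½ dᵀ∇²f_j(x)d + g_j(x+d) − g_j(x)`, where the Hessian is
the Fréchet derivative of the gradient. -/
def Qj {n m : ℕ} (f g : Fin (m + 1) → EuclideanSpace ℝ (Fin n) → ℝ)
    (j : Fin (m + 1)) (x d : EuclideanSpace ℝ (Fin n)) : ℝ :=
  ⟪gradient (f j) x, d⟫ + (1 / 2) * ⟪(fderiv ℝ (gradient (f j)) x) d, d⟫
    + g j (x + d) - g j x

/-- `Q(x,d) = max_{1 ≤ j ≤ m} Q_j(x,d)`. -/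
def Qmax {n m : ℕ} (f g : Fin (m + 1) → EuclideanSpace ℝ (Fin n) → ℝ)
    (x d : EuclideanSpace ℝ (Fin n)) : ℝ :=
  Finset.univ.sup' Finset.univ_nonempty (fun j => Qj f g j x d)

lemma sandwich {n : ℕ} {A B : EuclideanSpace ℝ (Fin n) → ℝ}
    (hA : ConvexOn ℝ Set.univ A) (hAc : Continuous A) (hA0 : A 0 = 0)
    (hB : ConvexOn ℝ Set.univ B) (hB0 : B 0 = 0)
    (hAB : ∀ v, 0 ≤ A v + B v) :
    ∃ ℓ : EuclideanSpace ℝ (Fin n) →L[ℝ] ℝ, (∀ v, ℓ v ≤ A v) ∧ (∀ v, -ℓ v ≤ B v) := by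
  have hS₁o : IsOpen {p : EuclideanSpace ℝ (Fin n) × ℝ | A p.1 < p.2} :=
    isOpen_lt (hAc.fst') continuous_snd
  have hS₁c : Convex ℝ {p : EuclideanSpace ℝ (Fin n) × ℝ | A p.1 < p.2} := by
    intro p hp q hq a b ha hb hab
    simp only [Set.mem_setOf_eq, Prod.fst_add, Prod.smul_fst, Prod.snd_add,
      Prod.smul_snd, smul_eq_mul] at hp hq ⊢
    rcases ha.eq_or_lt with rfl | ha'
    · rw [zero_add] at hab; subst hab; simpa using hq
    · have h1 : a * A p.1 < a * p.2 := (mul_lt_mul_iff_right₀ ha').2 hp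
      have h2 : b * A q.1 ≤ b * q.2 := mul_le_mul_of_nonneg_left hq.le hb
      have h3 := hA.2 (Set.mem_univ p.1) (Set.mem_univ q.1) ha hb hab
      simp only [smul_eq_mul] at h3
      linarith
  have hS₂c : Convex ℝ {p : EuclideanSpace ℝ (Fin n) × ℝ | p.2 ≤ -B p.1} := by
    intro p hp q hq a b ha hb hab
    simp only [Set.mem_setOf_eq, Prod.fst_add, Prod.smul_fst, Prod.snd_add,
      Prod.smul_snd, smul_eq_mul] at hp hq ⊢
    have h3 := hB.2 (Set.mem_univ p.1) (Set.mem_univ q.1) ha hb hab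
    simp only [smul_eq_mul] at h3
    have h1 : a * p.2 ≤ a * (-B p.1) := mul_le_mul_of_nonneg_left hp ha
    have h2 : b * q.2 ≤ b * (-B q.1) := mul_le_mul_of_nonneg_left hq hb
    linarith
  have hdisj : Disjoint {p : EuclideanSpace ℝ (Fin n) × ℝ | A p.1 < p.2}
      {p : EuclideanSpace ℝ (Fin n) × ℝ | p.2 ≤ -B p.1} := by
    rw [Set.disjoint_left]
    intro p h1 h2
    simp only [Set.mem_setOf_eq] at h1 h2
    have := hAB p.1
    linarith
  obtain ⟨f, u, hf₁, hf₂⟩ := geometric_hahn_banach_open hS₁c hS₁o hS₂c hdisj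
  set β : ℝ := f (0, 1) with hβdef
  set φ : EuclideanSpace ℝ (Fin n) →L[ℝ] ℝ :=
    f.comp (ContinuousLinearMap.inl ℝ (EuclideanSpace ℝ (Fin n)) ℝ) with hφdef
  have hsplit : ∀ (v : EuclideanSpace ℝ (Fin n)) (s : ℝ), f (v, s) = φ v + s * β := by
    intro v s
    have h : (v, s) = (v, (0:ℝ)) + s • ((0 : EuclideanSpace ℝ (Fin n)), (1:ℝ)) := by
      simp [Prod.ext_iff]
    rw [h, map_add, map_smul, hβdef, hφdef, smul_eq_mul]
    rfl
  have hu0 : u ≤ 0 := by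
    have h := hf₂ (0, 0) (by simp [hB0])
    simpa [hsplit] using h
  have hu0' : 0 ≤ u := by
    have h : ∀ s : ℝ, 0 < s → s * β < u := by
      intro s hs
      have := hf₁ ((0 : EuclideanSpace ℝ (Fin n)), s) (by simp [hA0, hs])
      simpa [hsplit] using this
    by_contra hcon
    push_neg at hcon
    have hlim : Tendsto (fun s : ℝ => s * β) (𝓝[>] 0) (𝓝 0) := by
      have h2 : Tendsto (fun s : ℝ => s * β) (𝓝 0) (𝓝 (0 * β)) :=
        (continuous_id.mul continuous_const).tendsto 0
      simpa using h2.mono_left nhdsWithin_le_nhds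
    have : (0:ℝ) ≤ u := le_of_tendsto hlim
      (eventually_nhdsWithin_of_forall (fun s hs => (h s hs).le))
    linarith
  have hu : u = 0 := le_antisymm hu0 hu0'
  have hβ : β < 0 := by
    have := hf₁ ((0 : EuclideanSpace ℝ (Fin n)), 1) (by simp [hA0])
    rw [hsplit, hu] at this
    simpa using this
  set c : ℝ := -β with hcdef
  have hc : (0:ℝ) < c := by rw [hcdef]; linarith
  refine ⟨c⁻¹ • φ, ?_, ?_⟩
  · intro v
    have h2 : ∀ ε : ℝ, 0 < ε → c⁻¹ * φ v ≤ A v + ε := by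
      intro ε hε
      have h3 := hf₁ (v, A v + ε) (by simp; linarith)
      rw [hsplit, hu] at h3
      have h4 : (A v + ε) * c = -((A v + ε) * β) := by rw [hcdef]; ring
      have h5 : φ v < (A v + ε) * c := by rw [h4]; linarith
      have h6 : c⁻¹ * φ v = φ v / c := by rw [div_eq_inv_mul]
      rw [h6, div_le_iff₀ hc]
      linarith
    have := le_of_forall_pos_le_add (fun ε hε => h2 ε hε)
    simpa using this
  · intro v
    have h3 := hf₂ (v, -B v) (by simp)
    rw [hsplit, hu] at h3
    have h4 : -φ v ≤ B v * c := by
      have : B v * c = (-B v) * β := by rw [hcdef]; ring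
      linarith [this ▸ (by linarith : -φ v ≤ (-B v) * β)]
    have h5 : -(c⁻¹ * φ v) = (-φ v) / c := by field_simp
    have : -(c⁻¹ * φ v) ≤ B v := by rw [h5, div_le_iff₀ hc]; linarith
    simpa using this
lemma combo_shift {n : ℕ} (c u w : EuclideanSpace ℝ (Fin n)) {a b : ℝ} (hab : a + b = 1) :
    c + (a • u + b • w) = a • (c + u) + b • (c + w) := by
  have h : a • c + b • c = c := by rw [← add_smul, hab, one_smul]
  rw [smul_add, smul_add]
  conv_lhs => rw [← h]
  abel

lemma convexOn_shift {n : ℕ} {h : EuclideanSpace ℝ (Fin n) → ℝ}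
    (hc : ConvexOn ℝ Set.univ h) (c : EuclideanSpace ℝ (Fin n)) :
    ConvexOn ℝ Set.univ (fun v => h (c + v) - h c) := by
  refine ⟨convex_univ, fun u _ w _ a b ha hb hab => ?_⟩
  simp only [smul_eq_mul]
  rw [combo_shift c u w hab]
  have h2 := hc.2 (Set.mem_univ (c + u)) (Set.mem_univ (c + w)) ha hb hab
  simp only [smul_eq_mul] at h2
  have h3 : a * h c + b * h c = h c := by rw [← add_mul, hab, one_mul]
  linarith

lemma convexOn_shift_neg {n : ℕ} {h : EuclideanSpace ℝ (Fin n) → ℝ}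
    (hc : ConvexOn ℝ Set.univ h) (c : EuclideanSpace ℝ (Fin n)) :
    ConvexOn ℝ Set.univ (fun v => h (c - v) - h c) := by
  refine ⟨convex_univ, fun u _ w _ a b ha hb hab => ?_⟩
  simp only [smul_eq_mul]
  have key : c - (a • u + b • w) = a • (c - u) + b • (c - w) := by
    have h : a • c + b • c = c := by rw [← add_smul, hab, one_smul]
    rw [smul_sub, smul_sub]
    conv_lhs => rw [← h]
    abel
  rw [key]
  have h2 := hc.2 (Set.mem_univ (c - u)) (Set.mem_univ (c - w)) ha hb hab
  simp only [smul_eq_mul] at h2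
  have h3 : a * h c + b * h c = h c := by rw [← add_mul, hab, one_mul]
  linarith

lemma exists_subgrad {n : ℕ} {h : EuclideanSpace ℝ (Fin n) → ℝ}
    (hc : ConvexOn ℝ Set.univ h) (hcont : Continuous h) (y : EuclideanSpace ℝ (Fin n)) :
    ∃ ξ, ξ ∈ subdiff h y := by
  obtain ⟨ℓ, hℓ, -⟩ := sandwich (A := fun v => h (y + v) - h y) (B := fun v => h (y - v) - h y)
    (convexOn_shift hc y) (by continuity) (by simp)
    (convexOn_shift_neg hc y) (by simp)
    (fun v => by
      have h2 := hc.2 (Set.mem_univ (y + v)) (Set.mem_univ (y - v))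
        (by norm_num : (0:ℝ) ≤ 1/2) (by norm_num : (0:ℝ) ≤ 1/2) (by norm_num)
      simp only [smul_eq_mul] at h2
      have h3 : (1/2 : ℝ) • (y + v) + (1/2 : ℝ) • (y - v) = y := by
        rw [smul_add, smul_sub]
        rw [show ((1:ℝ)/2) • y + (((1:ℝ)/2) • v) + ((((1:ℝ)/2) • y) - ((1:ℝ)/2) • v)
          = ((1/2 : ℝ) + (1/2 : ℝ)) • y by rw [add_smul]; abel]
        norm_num
      rw [h3] at h2
      linarith)
  refine ⟨(InnerProductSpace.toDual ℝ _).symm ℓ, fun z => ?_⟩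
  have := hℓ (z - y)
  rw [InnerProductSpace.toDual_symm_apply]
  have hz : y + (z - y) = z := by abel
  rw [hz] at this
  linarith

lemma clm_convexOn {n : ℕ} (L : EuclideanSpace ℝ (Fin n) →L[ℝ] ℝ) :
    ConvexOn ℝ Set.univ (fun v => L v) := by
  refine ⟨convex_univ, fun u _ w _ a b ha hb hab => ?_⟩
  simp [map_add, map_smul, smul_eq_mul]

lemma decomp {n : ℕ} {ι : Type*} [DecidableEq ι] {F : ι → EuclideanSpace ℝ (Fin n) → ℝ}
    (hconv : ∀ j, ConvexOn ℝ Set.univ (F j)) (hcont : ∀ j, Continuous (F j))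
    (h0 : ∀ j, F j 0 = 0) (s : Finset ι) :
    ∀ L : EuclideanSpace ℝ (Fin n) →L[ℝ] ℝ,
      (∀ v, 0 ≤ L v + ∑ j ∈ s, F j v) →
      ∃ ℓ : ι → EuclideanSpace ℝ (Fin n) →L[ℝ] ℝ,
        (∀ j ∈ s, ∀ v, ℓ j v ≤ F j v) ∧ (∀ v, L v + ∑ j ∈ s, ℓ j v = 0) := by
  induction s using Finset.induction_on with
  | empty =>
    intro L hL
    refine ⟨fun _ => 0, by simp, fun v => ?_⟩
    simp only [Finset.sum_empty, add_zero] at hL ⊢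
    have h1 := hL v
    have h2 := hL (-v)
    rw [map_neg] at h2
    linarith
  | @insert a s ha ih =>
    intro L hL
    have hB : ConvexOn ℝ Set.univ (fun v => L v + ∑ j ∈ s, F j v) := by
      refine ⟨convex_univ, fun u _ w _ p q hp hq hpq => ?_⟩
      simp only [smul_eq_mul, map_add, map_smul]
      have hsum : ∀ j ∈ s, F j (p • u + q • w) ≤ p * F j u + q * F j w := by
        intro j _
        have := (hconv j).2 (Set.mem_univ u) (Set.mem_univ w) hp hq hpq
        simpa [smul_eq_mul] using this
      have := Finset.sum_le_sum hsum
      rw [Finset.sum_add_distrib, ← Finset.mul_sum, ← Finset.mul_sum] at this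
      linarith
    obtain ⟨ℓa, hℓa1, hℓa2⟩ := sandwich (hconv a) (hcont a) (h0 a) hB
      (by simp [h0]) (fun v => by have := hL v; rw [Finset.sum_insert ha] at this; linarith)
    obtain ⟨ℓ', hℓ'1, hℓ'2⟩ := ih (L + ℓa) (fun v => by
      have h2 := hℓa2 v
      have h3 : (L + ℓa) v = L v + ℓa v := rfl
      rw [h3]; linarith)
    refine ⟨Function.update ℓ' a ℓa, ?_, ?_⟩
    · intro j hj v
      rcases Finset.mem_insert.1 hj with rfl | hj'
      · rw [Function.update_self]; exact hℓa1 v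
      · rw [Function.update_of_ne (fun hja => ha (by rw [← hja]; exact hj')) _ _]; exact hℓ'1 j hj' v
    · intro v
      rw [Finset.sum_insert ha]
      have hcongr : ∑ j ∈ s, (Function.update ℓ' a ℓa j) v = ∑ j ∈ s, (ℓ' j) v :=
        Finset.sum_congr rfl (fun j hj => by
          rw [Function.update_of_ne (fun hja => ha (by rw [← hja]; exact hj)) _ _])
      rw [Function.update_self, hcongr]
      have h2 := hℓ'2 v
      have h3 : (L + ℓa) v = L v + ℓa v := rfl
      rw [h3] at h2
      linarith

lemma grad_inner {n : ℕ} (f : EuclideanSpace ℝ (Fin n) → ℝ) (y v : EuclideanSpace ℝ (Fin n)) :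
    ⟪gradient f y, v⟫ = fderiv ℝ f y v := by
  rw [gradient, InnerProductSpace.toDual_symm_apply]

lemma fderiv_gradient_eq {n : ℕ} (f : EuclideanSpace ℝ (Fin n) → ℝ)
    (x u : EuclideanSpace ℝ (Fin n)) :
    fderiv ℝ (gradient f) x u
      = (InnerProductSpace.toDual ℝ _).symm (fderiv ℝ (fderiv ℝ f) x u) := by
  have h : gradient f = ⇑(InnerProductSpace.toDual ℝ (EuclideanSpace ℝ (Fin n))).symm
      ∘ fderiv ℝ f := rfl
  rw [h, LinearIsometryEquiv.comp_fderiv]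
  rfl

lemma hessian_inner {n : ℕ} (f : EuclideanSpace ℝ (Fin n) → ℝ)
    (x u w : EuclideanSpace ℝ (Fin n)) :
    ⟪fderiv ℝ (gradient f) x u, w⟫ = fderiv ℝ (fderiv ℝ f) x u w := by
  rw [fderiv_gradient_eq, InnerProductSpace.toDual_symm_apply]

lemma hessian_symm {n : ℕ} {f : EuclideanSpace ℝ (Fin n) → ℝ} (hf : ContDiff ℝ 2 f)
    (x u w : EuclideanSpace ℝ (Fin n)) :
    ⟪fderiv ℝ (gradient f) x u, w⟫ = ⟪fderiv ℝ (gradient f) x w, u⟫ := by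
  rw [hessian_inner, hessian_inner]
  exact second_derivative_symmetric
    (fun y => (hf.differentiable two_ne_zero y).hasFDerivAt)
    (((hf.fderiv_right (m := 1) (by norm_num)).differentiable one_ne_zero x).hasFDerivAt) u w

lemma convexOn_line {n : ℕ} {f : EuclideanSpace ℝ (Fin n) → ℝ}
    (hconv : ConvexOn ℝ Set.univ f) (x v : EuclideanSpace ℝ (Fin n)) :
    ConvexOn ℝ Set.univ (fun s : ℝ => f (x + s • v)) := by
  refine ⟨convex_univ, fun p _ q _ a b ha hb hab => ?_⟩
  simp only [smul_eq_mul]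
  have key : x + (a * p + b * q) • v = a • (x + p • v) + b • (x + q • v) := by
    have h : a • x + b • x = x := by rw [← add_smul, hab, one_smul]
    rw [smul_add, smul_add]
    conv_lhs => rw [← h]
    rw [add_smul, mul_smul, mul_smul]
    abel
  rw [key]
  have h2 := hconv.2 (Set.mem_univ (x + p • v)) (Set.mem_univ (x + q • v)) ha hb hab
  simpa [smul_eq_mul] using h2

lemma hessian_psd {n : ℕ} {f : EuclideanSpace ℝ (Fin n) → ℝ}
    (hconv : ConvexOn ℝ Set.univ f) (hf : ContDiff ℝ 2 f) (x v : EuclideanSpace ℝ (Fin n)) :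
    0 ≤ ⟪fderiv ℝ (gradient f) x v, v⟫ := by
  set G : ℝ → ℝ := fun s => ⟪gradient f (x + s • v), v⟫ with hGdef
  set F : ℝ → ℝ := fun s => f (x + s • v) with hFdef
  have hline : ∀ s : ℝ, HasDerivAt (fun r : ℝ => x + r • v) v s := fun s => by
    simpa using ((hasDerivAt_id s).smul_const v).const_add x
  have hFd : ∀ s, HasDerivAt F (G s) s := by
    intro s
    have hfd : HasFDerivAt f (fderiv ℝ f (x + s • v)) (x + s • v) :=
      (hf.differentiable two_ne_zero (x + s • v)).hasFDerivAt
    have h1 := hfd.comp_hasDerivAt s (hline s)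
    have h3 : G s = (fderiv ℝ f (x + s • v)) v := grad_inner f (x + s • v) v
    rw [h3]
    exact h1
  have hFconv : ConvexOn ℝ Set.univ F := convexOn_line hconv x v
  have hmono : ∀ s : ℝ, 0 < s → G 0 ≤ G s := by
    intro s hs
    have h1 : G 0 ≤ slope F 0 s :=
      hFconv.le_slope_of_hasDerivAt (Set.mem_univ 0) (Set.mem_univ s) hs (hFd 0)
    have h2 : slope F 0 s ≤ G s :=
      hFconv.slope_le_of_hasDerivAt (Set.mem_univ 0) (Set.mem_univ s) hs (hFd s)
    linarith
  -- G has derivative ⟪H v, v⟫ at 0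
  have hgradC1 : ContDiff ℝ 1 (gradient f) := by
    have h : gradient f = ⇑(InnerProductSpace.toDual ℝ (EuclideanSpace ℝ (Fin n))).symm
        ∘ fderiv ℝ f := rfl
    rw [h]
    exact (InnerProductSpace.toDual ℝ _).symm.contDiff.comp (hf.fderiv_right (by norm_num))
  have hG : HasDerivAt G ⟪fderiv ℝ (gradient f) x v, v⟫ 0 := by
    have hgd : HasFDerivAt (gradient f) (fderiv ℝ (gradient f) x) x :=
      ((hgradC1.differentiable one_ne_zero) x).hasFDerivAt
    have hgd' : HasFDerivAt (gradient f) (fderiv ℝ (gradient f) x) (x + (0:ℝ) • v) := by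
      simpa using hgd
    have hcomp : HasDerivAt (fun s : ℝ => gradient f (x + s • v))
        (fderiv ℝ (gradient f) x v) 0 := by
      have := hgd'.comp_hasDerivAt 0 (hline 0); exact this
    have hinner := ((innerSL ℝ v).hasFDerivAt.comp_hasDerivAt 0 hcomp)
    simp only [hGdef]
    have : ∀ s : ℝ, ⟪gradient f (x + s • v), v⟫
        = innerSL ℝ v (gradient f (x + s • v)) := fun s => real_inner_comm _ _
    simp only [this]
    have h2 : innerSL ℝ v (fderiv ℝ (gradient f) x v)
        = ⟪fderiv ℝ (gradient f) x v, v⟫ := by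
      rw [innerSL_apply_apply]; exact real_inner_comm _ _
    rw [← h2]
    exact hinner
  have htend : Tendsto (slope G 0) (𝓝[>] 0) (𝓝 ⟪fderiv ℝ (gradient f) x v, v⟫) :=
    ((hasDerivAt_iff_tendsto_slope).1 hG).mono_left
      (nhdsWithin_mono 0 (fun s hs => ne_of_gt hs))
  refine ge_of_tendsto htend ?_
  refine eventually_nhdsWithin_of_forall (fun s hs => ?_)
  have hs' : (0:ℝ) < s := hs
  rw [slope_def_field]
  exact div_nonneg (by linarith [hmono s hs']) (by linarith)

lemma quadratic_convexOn {n : ℕ} (H : EuclideanSpace ℝ (Fin n) →L[ℝ] EuclideanSpace ℝ (Fin n))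
    (hsym : ∀ u w, ⟪H u, w⟫ = ⟪H w, u⟫) (hpsd : ∀ v, 0 ≤ ⟪H v, v⟫) {c : ℝ} (hc : 0 ≤ c) :
    ConvexOn ℝ Set.univ (fun v => c * ⟪H v, v⟫) := by
  refine ⟨convex_univ, fun u _ w _ a b ha hb hab => ?_⟩
  simp only [smul_eq_mul]
  have hexp : ⟪H (a • u + b • w), a • u + b • w⟫
      = a * a * ⟪H u, u⟫ + 2 * (a * b) * ⟪H u, w⟫ + b * b * ⟪H w, w⟫ := by
    rw [map_add, map_smul, map_smul]
    rw [inner_add_left, inner_add_right, inner_add_right]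
    rw [real_inner_smul_left, real_inner_smul_left, real_inner_smul_right,
      real_inner_smul_right, real_inner_smul_left, real_inner_smul_left,
      real_inner_smul_right, real_inner_smul_right]
    rw [hsym w u]
    ring
  rw [hexp]
  have hkey : 0 ≤ ⟪H (u - w), u - w⟫ := hpsd (u - w)
  have hexp2 : ⟪H (u - w), u - w⟫ = ⟪H u, u⟫ - 2 * ⟪H u, w⟫ + ⟪H w, w⟫ := by
    rw [map_sub, inner_sub_left, inner_sub_right, inner_sub_right, hsym w u]
    ring
  rw [hexp2] at hkey
  have hb' : b = 1 - a := by linarith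
  subst hb'
  nlinarith [mul_nonneg (mul_nonneg hc (mul_nonneg ha hb)) hkey]

lemma exists_multipliers {n m : ℕ} (φ : Fin (m + 1) → EuclideanSpace ℝ (Fin n) → ℝ)
    (hφ : ∀ j, ConvexOn ℝ Set.univ (φ j)) (t : ℝ)
    (hmin : ∀ d, t ≤ Finset.univ.sup' Finset.univ_nonempty (fun j => φ j d)) :
    ∃ lam : Fin (m + 1) → ℝ, (∀ j, 0 ≤ lam j) ∧ (∑ j, lam j = 1) ∧
      (∀ d, t ≤ ∑ j, lam j * φ j d) := by
  classical
  set C : Set (Fin (m + 1) → ℝ) := {u | ∃ d, ∀ j, φ j d - t < u j} with hCdef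
  have hCopen : IsOpen C := by
    have : C = ⋃ d : EuclideanSpace ℝ (Fin n), ⋂ j, {u : Fin (m+1) → ℝ | φ j d - t < u j} := by
      ext u; simp [hCdef, Set.mem_iUnion, Set.mem_iInter]
    rw [this]
    exact isOpen_iUnion (fun d => isOpen_iInter_of_finite (fun j =>
      isOpen_lt continuous_const (continuous_apply j)))
  have hCconv : Convex ℝ C := by
    rintro u ⟨d, hd⟩ u' ⟨d', hd'⟩ a b ha hb hab
    rcases ha.eq_or_lt with rfl | ha'
    · rw [zero_add] at hab; subst hab
      refine ⟨d', fun j => ?_⟩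
      simpa using hd' j
    · refine ⟨a • d + b • d', fun j => ?_⟩
      have h2 := (hφ j).2 (Set.mem_univ d) (Set.mem_univ d') ha hb hab
      simp only [smul_eq_mul] at h2
      have h3 : a * (φ j d - t) < a * u j := (mul_lt_mul_iff_right₀ ha').2 (hd j)
      have h4 : b * (φ j d' - t) ≤ b * u' j := mul_le_mul_of_nonneg_left (hd' j).le hb
      have h5 : (a • u + b • u') j = a * u j + b * u' j := rfl
      rw [h5]
      have hab' : a * t + b * t = t := by rw [← add_mul, hab, one_mul]
      nlinarith [h2, h3, h4]
  have hC0 : (0 : Fin (m+1) → ℝ) ∉ C := by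
    rintro ⟨d, hd⟩
    obtain ⟨j₀, -, hj₀⟩ := Finset.exists_mem_eq_sup' Finset.univ_nonempty (fun j => φ j d)
    have h1 := hmin d
    rw [hj₀] at h1
    have := hd j₀
    simp only [Pi.zero_apply] at this
    linarith
  obtain ⟨f, hf⟩ := geometric_hahn_banach_open_point hCconv hCopen hC0
  rw [map_zero] at hf
  set μ : Fin (m + 1) → ℝ := fun j => f (Pi.single j 1) with hμdef
  have hfexp : ∀ u : Fin (m+1) → ℝ, f u = ∑ j, u j * μ j := by
    intro u
    have h1 : u = ∑ j, u j • (Pi.single j 1 : Fin (m+1) → ℝ) := by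
      ext k
      simp [Finset.sum_apply, Pi.single_apply]
    conv_lhs => rw [h1]
    rw [map_sum]
    exact Finset.sum_congr rfl (fun j _ => by rw [map_smul, smul_eq_mul])
  -- base point in C
  have hbase : ∀ (d : EuclideanSpace ℝ (Fin n)) (ε : ℝ), 0 < ε →
      (fun j => φ j d - t + ε) ∈ C := fun d ε hε => ⟨d, fun j => by dsimp only; linarith⟩
  have hμnonpos : ∀ j, μ j ≤ 0 := by
    intro j
    by_contra hpos
    push_neg at hpos
    -- take base point plus large multiple of e_j
    set u0 : Fin (m+1) → ℝ := fun k => φ k 0 - t + 1 with hu0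
    have hmem : ∀ s : ℝ, 0 < s → (u0 + s • (Pi.single j 1 : Fin (m+1) → ℝ)) ∈ C := by
      intro s hs
      refine ⟨0, fun k => ?_⟩
      have hk : (u0 + s • (Pi.single j 1 : Fin (m+1) → ℝ)) k
          = u0 k + s * (if k = j then 1 else 0) := by
        simp [Pi.single_apply]
      rw [hk]
      simp only [hu0]
      split_ifs with h <;> nlinarith
    have hlt : ∀ s : ℝ, 0 < s → f u0 + s * μ j < 0 := by
      intro s hs
      have h2 := hf _ (hmem s hs)
      rwa [map_add, map_smul, smul_eq_mul] at h2
    have hs : 0 < (|f u0| + 1) / μ j := div_pos (by positivity) hpos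
    have h1 := hlt _ hs
    rw [div_mul_cancel₀ _ (ne_of_gt hpos)] at h1
    have h3 : -f u0 ≤ |f u0| := neg_le_abs (f u0)
    linarith
  set S : ℝ := ∑ j, -μ j with hSdef
  have hSnonneg : ∀ k ∈ Finset.univ, (0:ℝ) ≤ -μ k := fun k _ => by linarith [hμnonpos k]
  have hSpos : 0 < S := by
    have hu1 : (fun j => φ j 0 - t + 1) ∈ C := hbase 0 1 one_pos
    have hfu := hf _ hu1
    rw [hfexp] at hfu
    rcases hSpos0 : lt_or_eq_of_le (Finset.sum_nonneg hSnonneg) with h | h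
    · exact h
    · exfalso
      have hall : ∀ j, μ j = 0 := by
        intro j
        have h2 := (Finset.sum_eq_zero_iff_of_nonneg hSnonneg).1 h.symm j (Finset.mem_univ j)
        linarith
      simp only [hall, mul_zero, Finset.sum_const_zero] at hfu
      linarith
  have hsum1 : ∑ j, -μ j / S = 1 := by
    rw [← Finset.sum_div, ← hSdef, div_self hSpos.ne']
  refine ⟨fun j => -μ j / S, fun j => div_nonneg (by linarith [hμnonpos j]) hSpos.le,
    hsum1, ?_⟩
  intro d
  have hkey : ∀ ε : ℝ, 0 < ε → 0 < ∑ j, (φ j d - t + ε) * -μ j := by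
    intro ε hε
    have h2 := hf _ (hbase d ε hε)
    rw [hfexp] at h2
    have h3 : ∑ j, (φ j d - t + ε) * -μ j = -∑ j, (φ j d - t + ε) * μ j := by
      rw [← Finset.sum_neg_distrib]
      exact Finset.sum_congr rfl (fun j _ => by ring)
    rw [h3]
    linarith
  have hsplit : ∀ ε : ℝ, ∑ j, (φ j d - t + ε) * -μ j
      = (∑ j, (φ j d - t) * -μ j) + ε * S := by
    intro ε
    rw [hSdef, Finset.mul_sum, ← Finset.sum_add_distrib]
    exact Finset.sum_congr rfl (fun j _ => by ring)
  have hge : 0 ≤ ∑ j, (φ j d - t) * -μ j := by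
    by_contra hneg
    push_neg at hneg
    have hε : (0:ℝ) < -(∑ j, (φ j d - t) * -μ j) / S := div_pos (by linarith) hSpos
    have h2 := hkey _ hε
    rw [hsplit, div_mul_cancel₀ _ hSpos.ne'] at h2
    linarith
  have h3 : ∑ j, -μ j / S * φ j d - t = (∑ j, (φ j d - t) * -μ j) / S := by
    rw [Finset.sum_div]
    have h4 : ∀ j ∈ Finset.univ, (φ j d - t) * -μ j / S
        = -μ j / S * φ j d - -μ j / S * t := fun j _ => by ring
    rw [Finset.sum_congr rfl h4, Finset.sum_sub_distrib, ← Finset.sum_mul, hsum1, one_mul]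
  have h5 : 0 ≤ (∑ j, (φ j d - t) * -μ j) / S := div_nonneg hge hSpos.le
  linarith [h3 ▸ h5]

lemma inner_convexOn {n : ℕ} (c : EuclideanSpace ℝ (Fin n)) :
    ConvexOn ℝ Set.univ (fun v => ⟪c, v⟫) := by
  refine ⟨convex_univ, fun u _ w _ a b _ _ _ => ?_⟩
  simp only [smul_eq_mul]
  rw [inner_add_right, real_inner_smul_right, real_inner_smul_right]

/-- KKT conditions at a global minimizer `d(x)` of `d ↦ Q(x,d)`, with
`t(x) = Q(x,d(x))`: there exist multipliers `λ_j ≥ 0` summing to one and subgradients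
`ξ_j ∈ ∂g_j(x + d(x))` with `Σ λ_j (∇f_j(x) + ∇²f_j(x)d(x) + ξ_j) = 0`, complementarity
`λ_j (Q_j(x,d(x)) − t(x)) = 0`, and `Q_j(x,d(x)) ≤ t(x)` for every `j`. -/
theorem kkt_conditions_of_minimizer {n m : ℕ}
    (f g : Fin (m + 1) → EuclideanSpace ℝ (Fin n) → ℝ)
    (hfconv : ∀ j, ConvexOn ℝ Set.univ (f j))
    (hfC2 : ∀ j, ContDiff ℝ 2 (f j))
    (hgconv : ∀ j, ConvexOn ℝ Set.univ (g j))
    (hgcont : ∀ j, Continuous (g j))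
    (x dx : EuclideanSpace ℝ (Fin n)) (t : ℝ)
    (hmin : ∀ d, Qmax f g x dx ≤ Qmax f g x d)
    (ht : t = Qmax f g x dx) :
    ∃ (lam : Fin (m + 1) → ℝ) (ξ : Fin (m + 1) → EuclideanSpace ℝ (Fin n)),
      (∀ j, 0 ≤ lam j) ∧ (∑ j, lam j = 1) ∧
      (∀ j, ξ j ∈ subdiff (g j) (x + dx)) ∧
      (∑ j, lam j • (gradient (f j) x + (fderiv ℝ (gradient (f j)) x) dx + ξ j) = 0) ∧
      (∀ j, lam j * (Qj f g j x dx - t) = 0) ∧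
      (∀ j, Qj f g j x dx ≤ t) := by
  classical
  set H : Fin (m+1) → EuclideanSpace ℝ (Fin n) →L[ℝ] EuclideanSpace ℝ (Fin n) :=
    fun j => fderiv ℝ (gradient (f j)) x with hHdef
  set a : Fin (m+1) → EuclideanSpace ℝ (Fin n) :=
    fun j => gradient (f j) x + H j dx with hadef
  set φ : Fin (m+1) → EuclideanSpace ℝ (Fin n) → ℝ := fun j d => Qj f g j x d with hφdef
  have hφeq : ∀ j d, φ j d = ⟪gradient (f j) x, d⟫ + 1/2 * ⟪H j d, d⟫
      + g j (x + d) - g j x := fun j d => rfl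
  have hsym : ∀ j u w, ⟪H j u, w⟫ = ⟪H j w, u⟫ := fun j => hessian_symm (hfC2 j) x
  have hpsd : ∀ j v, 0 ≤ ⟪H j v, v⟫ := fun j => hessian_psd (hfconv j) (hfC2 j) x
  have hφconv : ∀ j, ConvexOn ℝ Set.univ (φ j) := by
    intro j
    have h1 : ConvexOn ℝ Set.univ (fun d => ⟪gradient (f j) x, d⟫) :=
      inner_convexOn _
    have h2 : ConvexOn ℝ Set.univ (fun d => (1/2 : ℝ) * ⟪H j d, d⟫) :=
      quadratic_convexOn (H j) (hsym j) (hpsd j) (by norm_num)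
    have h3 : ConvexOn ℝ Set.univ (fun d => g j (x + d) - g j x) :=
      convexOn_shift (hgconv j) x
    have heq : φ j = fun d => (⟪gradient (f j) x, d⟫ + (1/2 : ℝ) * ⟪H j d, d⟫)
        + (g j (x + d) - g j x) := by
      funext d; rw [hφeq]; ring
    rw [heq]
    exact (h1.add h2).add h3
  have hmin' : ∀ d, t ≤ Finset.univ.sup' Finset.univ_nonempty (fun j => φ j d) := by
    intro d; rw [ht]; exact hmin d
  obtain ⟨lam, hlam0, hlam1, hkey⟩ := exists_multipliers φ hφconv t hmin'
  have hφle : ∀ j, φ j dx ≤ t := by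
    intro j; rw [ht]
    exact Finset.le_sup' (fun j => Qj f g j x dx) (Finset.mem_univ j)
  have hsumt : ∑ j, lam j * t = t := by rw [← Finset.sum_mul, hlam1, one_mul]
  have heqt : ∑ j, lam j * φ j dx = t := by
    refine le_antisymm ?_ (hkey dx)
    calc ∑ j, lam j * φ j dx ≤ ∑ j, lam j * t :=
      Finset.sum_le_sum (fun j _ => mul_le_mul_of_nonneg_left (hφle j) (hlam0 j))
    _ = t := hsumt
  have hcomp : ∀ j, lam j * (φ j dx - t) = 0 := by
    have hnn : ∀ j ∈ Finset.univ, (0:ℝ) ≤ lam j * (t - φ j dx) :=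
      fun j _ => mul_nonneg (hlam0 j) (by linarith [hφle j])
    have hzero : ∑ j, lam j * (t - φ j dx) = 0 := by
      have : ∀ j ∈ Finset.univ, lam j * (t - φ j dx) = lam j * t - lam j * φ j dx :=
        fun j _ => by ring
      rw [Finset.sum_congr rfl this, Finset.sum_sub_distrib, hsumt, heqt, sub_self]
    intro j
    have := (Finset.sum_eq_zero_iff_of_nonneg hnn).1 hzero j (Finset.mem_univ j)
    nlinarith [this]
  -- decomposition step
  set F : Fin (m+1) × Bool → EuclideanSpace ℝ (Fin n) → ℝ := fun i v =>
    if i.2 then lam i.1 * (1/2 * ⟪H i.1 v, v⟫)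
    else lam i.1 * (g i.1 (x + dx + v) - g i.1 (x + dx)) with hFdef
  have hFtrue : ∀ j v, F (j, true) v = lam j * (1/2 * ⟪H j v, v⟫) := fun j v => rfl
  have hFfalse : ∀ j v, F (j, false) v
      = lam j * (g j (x + dx + v) - g j (x + dx)) := fun j v => rfl
  have hFconv : ∀ i, ConvexOn ℝ Set.univ (F i) := by
    rintro ⟨j, b⟩
    cases b
    · show ConvexOn ℝ Set.univ fun v => lam j * (g j (x + dx + v) - g j (x + dx))
      have h3 := (convexOn_shift (hgconv j) (x + dx)).smul (hlam0 j)
      convert h3 using 2 with v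
      all_goals rfl
    · show ConvexOn ℝ Set.univ fun v => lam j * (1/2 * ⟪H j v, v⟫)
      have h2 := quadratic_convexOn (H j) (hsym j) (hpsd j)
        (c := lam j * (1/2)) (mul_nonneg (hlam0 j) (by norm_num))
      convert h2 using 2 with v
      ring
  have hFcont : ∀ i, Continuous (F i) := by
    rintro ⟨j, b⟩
    cases b
    · show Continuous fun v => lam j * (g j (x + dx + v) - g j (x + dx))
      exact continuous_const.mul
        (((hgcont j).comp (continuous_const.add continuous_id)).sub continuous_const)
    · show Continuous fun v => lam j * (1/2 * ⟪H j v, v⟫)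
      exact continuous_const.mul
        (continuous_const.mul ((H j).continuous.inner continuous_id))
  have hF0 : ∀ i, F i 0 = 0 := by
    rintro ⟨j, b⟩
    cases b
    · show lam j * (g j (x + dx + 0) - g j (x + dx)) = 0
      rw [add_zero, sub_self, mul_zero]
    · show lam j * (1/2 * ⟪H j 0, 0⟫) = 0
      rw [map_zero, inner_zero_left]; ring
  set L : EuclideanSpace ℝ (Fin n) →L[ℝ] ℝ :=
    ∑ j, lam j • innerSL ℝ (a j) with hLdef
  have hLapp : ∀ v, L v = ∑ j, lam j * ⟪a j, v⟫ := by
    intro v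
    rw [hLdef, ContinuousLinearMap.sum_apply]
    exact Finset.sum_congr rfl (fun j _ => by
      rw [ContinuousLinearMap.smul_apply, innerSL_apply_apply, smul_eq_mul])
  have hexpand : ∀ j v, lam j * (φ j (dx + v) - φ j dx)
      = lam j * ⟪a j, v⟫ + F (j, true) v + F (j, false) v := by
    intro j v
    rw [hFtrue, hFfalse, hφeq, hφeq, hadef]
    rw [inner_add_right (𝕜 := ℝ) (gradient (f j) x) dx v]
    rw [show H j (dx + v) = H j dx + H j v from map_add _ _ _]
    rw [inner_add_left, inner_add_right, inner_add_right, hsym j v dx]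
    rw [inner_add_left]
    rw [show x + (dx + v) = x + dx + v from (add_assoc x dx v).symm]
    ring
  have hpos : ∀ v, 0 ≤ L v + ∑ i, F i v := by
    intro v
    have hsum : ∑ i, F i v = ∑ j, (F (j, true) v + F (j, false) v) := by
      rw [Fintype.sum_prod_type]
      exact Finset.sum_congr rfl (fun j _ => by rw [Fintype.sum_bool])
    have hbig : L v + ∑ i, F i v
        = ∑ j, lam j * φ j (dx + v) - ∑ j, lam j * φ j dx := by
      rw [hLapp, hsum, ← Finset.sum_sub_distrib, ← Finset.sum_add_distrib]
      refine Finset.sum_congr rfl (fun j _ => ?_)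
      have h2 := hexpand j v
      have h3 : lam j * φ j (dx + v) - lam j * φ j dx
          = lam j * (φ j (dx + v) - φ j dx) := by ring
      rw [h3, h2]; ring
    rw [hbig, heqt]
    linarith [hkey (dx + v)]
  obtain ⟨ℓ, hℓ1, hℓ2⟩ := decomp hFconv hFcont hF0 Finset.univ L hpos
  have hℓ1' : ∀ i v, ℓ i v ≤ F i v := fun i v => hℓ1 i (Finset.mem_univ i) v
  -- quadratic components vanish
  have hqle : ∀ j v, ℓ (j, true) v ≤ 0 := by
    intro j v
    refine le_of_forall_pos_le_add (fun ε' hε' => ?_)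
    set K : ℝ := lam j * (1/2 * ⟪H j v, v⟫) with hKdef
    have hK : 0 ≤ K := mul_nonneg (hlam0 j) (mul_nonneg (by norm_num) (hpsd j v))
    have h2 : ∀ ε : ℝ, 0 < ε → ℓ (j, true) v ≤ ε * K := by
      intro ε hε
      have h3 := hℓ1' (j, true) (ε • v)
      rw [hFtrue] at h3
      have h4 : ⟪H j (ε • v), ε • v⟫ = ε * ε * ⟪H j v, v⟫ := by
        rw [map_smul, real_inner_smul_left, real_inner_smul_right]; ring
      rw [map_smul, smul_eq_mul, h4] at h3
      have h5 : lam j * (1/2 * (ε * ε * ⟪H j v, v⟫)) = ε * (ε * K) := by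
        rw [hKdef]; ring
      rw [h5] at h3
      exact (mul_le_mul_iff_right₀ hε).1 h3
    have hε : 0 < ε' / (K + 1) := div_pos hε' (by linarith)
    have h6 := h2 _ hε
    rw [zero_add]
    calc ℓ (j, true) v ≤ ε' / (K + 1) * K := h6
    _ ≤ ε' := by rw [div_mul_eq_mul_div, div_le_iff₀ (by linarith)]; nlinarith
  have hquad0 : ∀ j v, ℓ (j, true) v = 0 := by
    intro j v
    have h1 := hqle j v
    have h2 := hqle j (-v)
    rw [map_neg] at h2
    linarith
  -- choose subgradients
  have hsub : ∀ j, ∃ ξ : EuclideanSpace ℝ (Fin n), ξ ∈ subdiff (g j) (x + dx) ∧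
      (∀ w, lam j * ⟪ξ, w⟫ = ℓ (j, false) w) := by
    intro j
    rcases (hlam0 j).eq_or_lt with h0 | hpos
    · obtain ⟨ξ, hξ⟩ := exists_subgrad (hgconv j) (hgcont j) (x + dx)
      have hz : ∀ w, ℓ (j, false) w ≤ 0 := by
        intro w
        have h3 := hℓ1' (j, false) w
        rw [hFfalse, ← h0, zero_mul] at h3
        exact h3
      refine ⟨ξ, hξ, fun w => ?_⟩
      have h4 := hz w
      have h5 := hz (-w)
      rw [map_neg] at h5
      rw [← h0, zero_mul]
      linarith
    · refine ⟨(lam j)⁻¹ • (InnerProductSpace.toDual ℝ _).symm (ℓ (j, false)), fun y => ?_,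
        fun w => ?_⟩
      · have h3 := hℓ1' (j, false) (y - (x + dx))
        rw [hFfalse] at h3
        rw [show x + dx + (y - (x + dx)) = y from by abel] at h3
        rw [real_inner_smul_left, InnerProductSpace.toDual_symm_apply]
        have h8 : (lam j)⁻¹ * ℓ (j, false) (y - (x + dx)) ≤ g j y - g j (x + dx) := by
          rw [← div_eq_inv_mul, div_le_iff₀ hpos]
          calc ℓ (j, false) (y - (x + dx)) ≤ lam j * (g j y - g j (x + dx)) := h3
          _ = (g j y - g j (x + dx)) * lam j := by ring
        linarith
      · rw [real_inner_smul_left, InnerProductSpace.toDual_symm_apply]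
        field_simp
  choose ξ hξmem hξeq using hsub
  refine ⟨lam, ξ, hlam0, hlam1, hξmem, ?_, hcomp, hφle⟩
  -- the stationarity equation
  have hzw : ∀ w, ⟪∑ j, lam j • (gradient (f j) x + H j dx + ξ j), w⟫ = 0 := by
    intro w
    rw [sum_inner]
    have hterm : ∀ j ∈ Finset.univ, ⟪lam j • (gradient (f j) x + H j dx + ξ j), w⟫
        = lam j * ⟪a j, w⟫ + ℓ (j, false) w := by
      intro j _
      rw [real_inner_smul_left, inner_add_left, ← hξeq j w, hadef]
      ring
    rw [Finset.sum_congr rfl hterm, Finset.sum_add_distrib]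
    have h2 := hℓ2 w
    rw [hLapp] at h2
    have h3 : ∑ i, ℓ i w = ∑ j, ℓ (j, false) w := by
      rw [Fintype.sum_prod_type]
      refine Finset.sum_congr rfl (fun j _ => ?_)
      rw [Fintype.sum_bool, hquad0 j w, zero_add]
    rw [h3] at h2
    linarith
  have := hzw (∑ j, lam j • (gradient (f j) x + H j dx + ξ j))
  exact inner_self_eq_zero.1 this
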